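/- Let a, b and d > 1 be pairwise coprime odd integers with a, b nonzero. Then d ∈ G_{(a,b)} if and only if 2d ∈ G_{(a,b)}. Moreover, if d ∈ G_{(a,b)}, then ord_{2d}(a/b) = ord_d(a/b) and this common value is even. -/

import Mathlib

/-- `d ∈ G_{(a,b)}`: the positive integer `d` divides `a^k + b^k` for some integer `k ≥ 1`. -/
def Good (a b : ℤ) (d : ℕ) : Prop := ∃ k : ℕ, 1 ≤ k ∧ (d : ℤ) ∣ a ^ k + b ^ k

/-- `ord_n(a/b)`: the multiplicative order of `a·b⁻¹` modulo `n`. -/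
noncomputable def ordAB (a b : ℤ) (n : ℕ) : ℕ :=
  orderOf ((a : ZMod n) * (b : ZMod n)⁻¹)

lemma isUnit_cast_of_isCoprime {b : ℤ} {n : ℕ} (h : IsCoprime b (n : ℤ)) :
    IsUnit ((b : ZMod n)) := by
  obtain ⟨u, v, huv⟩ := h
  have h2 : ((u * b + v * n : ℤ) : ZMod n) = 1 := by rw [huv]; norm_cast
  push_cast at h2
  rw [ZMod.natCast_self, mul_zero, add_zero] at h2
  exact IsUnit.of_mul_eq_one _ (by rw [mul_comm]; exact h2)

lemma pow_mul_inv_eq_iff (a b : ℤ) (n : ℕ) (hb : IsUnit ((b : ZMod n))) (k : ℕ)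
    (c : ZMod n) :
    ((a : ZMod n) * (b : ZMod n)⁻¹) ^ k = c ↔ (a : ZMod n) ^ k = c * (b : ZMod n) ^ k := by
  obtain ⟨β, hβ⟩ := hb
  have hinv : (b : ZMod n)⁻¹ = ↑β⁻¹ := by rw [← hβ, ZMod.inv_coe_unit]
  rw [mul_pow, hinv, ← Units.val_pow_eq_pow_val, inv_pow,
    Units.mul_inv_eq_iff_eq_mul, Units.val_pow_eq_pow_val, hβ]

lemma pow_eq_one_iff_dvd (a b : ℤ) (n : ℕ) (hb : IsUnit ((b : ZMod n))) (k : ℕ) :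
    ((a : ZMod n) * (b : ZMod n)⁻¹) ^ k = 1 ↔ (n : ℤ) ∣ a ^ k - b ^ k := by
  rw [pow_mul_inv_eq_iff a b n hb k 1, one_mul, ← sub_eq_zero]
  rw [← ZMod.intCast_zmod_eq_zero_iff_dvd]
  push_cast
  rfl

lemma pow_eq_neg_one_iff_dvd (a b : ℤ) (n : ℕ) (hb : IsUnit ((b : ZMod n))) (k : ℕ) :
    ((a : ZMod n) * (b : ZMod n)⁻¹) ^ k = -1 ↔ (n : ℤ) ∣ a ^ k + b ^ k := by
  rw [pow_mul_inv_eq_iff a b n hb k (-1), neg_one_mul, ← sub_eq_zero, sub_neg_eq_add]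
  rw [← ZMod.intCast_zmod_eq_zero_iff_dvd]
  push_cast
  rfl

theorem good_iff_good_two_mul (a b : ℤ) (ha : a ≠ 0) (hb : b ≠ 0)
    (haodd : Odd a) (hbodd : Odd b) (d : ℕ) (hd : 1 < d) (hdodd : Odd d)
    (hab : IsCoprime a b) (had : IsCoprime a (d : ℤ)) (hbd : IsCoprime b (d : ℤ)) :
    (Good a b d ↔ Good a b (2 * d)) ∧
      (Good a b d → ordAB a b (2 * d) = ordAB a b d ∧ Even (ordAB a b d)) := by
  have h2d : IsCoprime (2 : ℤ) (d : ℤ) := by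
    obtain ⟨m, hm⟩ := hdodd
    exact ⟨-(m : ℤ), 1, by push_cast [hm]; ring⟩
  have hb2 : IsCoprime b (2 : ℤ) := by
    obtain ⟨m, hm⟩ := hbodd
    exact ⟨1, -m, by rw [hm]; ring⟩
  have hb2d : IsCoprime b ((2 * d : ℕ) : ℤ) := by
    push_cast
    exact hb2.mul_right hbd
  have hub : IsUnit ((b : ZMod d)) := isUnit_cast_of_isCoprime hbd
  have hub2 : IsUnit ((b : ZMod (2 * d))) := isUnit_cast_of_isCoprime hb2d
  have hcast : ((2 * d : ℕ) : ℤ) = 2 * (d : ℤ) := by push_cast; ring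
  have hdvd2 : ∀ k : ℕ, 1 ≤ k → Even (a ^ k + b ^ k) := fun k hk =>
    (haodd.pow).add_odd (hbodd.pow)
  have hdvd2' : ∀ k : ℕ, Even (a ^ k - b ^ k) := fun k =>
    (haodd.pow).sub_odd (hbodd.pow)
  constructor
  · constructor
    · rintro ⟨k, hk, hdk⟩
      refine ⟨k, hk, ?_⟩
      rw [hcast]
      exact h2d.mul_dvd ((hdvd2 k hk).two_dvd) hdk
    · rintro ⟨k, hk, hdk⟩
      refine ⟨k, hk, dvd_trans ?_ hdk⟩
      rw [hcast]
      exact dvd_mul_left _ _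
  · rintro ⟨k, hk, hdk⟩
    set u : ZMod d := (a : ZMod d) * (b : ZMod d)⁻¹ with hu
    set v : ZMod (2 * d) := (a : ZMod (2 * d)) * (b : ZMod (2 * d))⁻¹ with hv
    have huk : u ^ k = -1 := (pow_eq_neg_one_iff_dvd a b d hub k).2 hdk
    have heq : ordAB a b (2 * d) = ordAB a b d := by
      apply Nat.dvd_antisymm
      · rw [ordAB, ordAB, orderOf_dvd_iff_pow_eq_one, ← hv,
          pow_eq_one_iff_dvd a b (2 * d) hub2, hcast]
        refine h2d.mul_dvd ((hdvd2' _).two_dvd) ?_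
        rw [← pow_eq_one_iff_dvd a b d hub]
        exact pow_orderOf_eq_one u
      · rw [ordAB, ordAB, orderOf_dvd_iff_pow_eq_one, ← hu,
          pow_eq_one_iff_dvd a b d hub]
        refine dvd_trans (show (d : ℤ) ∣ ((2 * d : ℕ) : ℤ) by rw [hcast]; exact dvd_mul_left _ _) ?_
        rw [← pow_eq_one_iff_dvd a b (2 * d) hub2]
        exact pow_orderOf_eq_one v
    refine ⟨heq, ?_⟩
    haveI : Fact (2 < d) := ⟨by
      rcases Nat.lt_or_ge d 3 with h | h
      · interval_cases d
        · exact absurd hdodd (by decide)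
      · omega⟩
    have hne : u ^ k ≠ 1 := by
      rw [huk]; exact ZMod.neg_one_ne_one
    have hndvd : ¬ orderOf u ∣ k := fun h => hne (orderOf_dvd_iff_pow_eq_one.1 h)
    have h2k : orderOf u ∣ 2 * k := by
      rw [orderOf_dvd_iff_pow_eq_one, mul_comm, pow_mul, huk]
      ring
    rw [ordAB, ← hu]
    by_contra hodd
    rw [← Nat.not_odd_iff_even, not_not] at hodd
    exact hndvd ((Nat.coprime_two_right.2 hodd).dvd_of_dvd_mul_left h2k)
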